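/- Let ⟨P, ⊴⟩ be a partial order PR and C a ⊴-maximal partition refiner. If B is a block witnessing that C is a partition refiner (B ∩ pre(μ𝒫(C)) ≠ ∅ and B ⊄ pre(μ𝒫(C))), then for every block C' with C ⊲ C', B not→∃ C'. -/
import Mathlib


/-- `P` is a partition of the whole state space. -/
def IsPartition {α : Type*} (P : Set (Set α)) : Prop :=
  (∀ B ∈ P, B.Nonempty) ∧ (∀ x : α, ∃! B, B ∈ P ∧ x ∈ B)

/-- `pre(T) = {s | ∃ t ∈ T, s → t}`. -/
def preR {α : Type*} (tr : α → α → Prop) (T : Set α) : Set α :=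
  {s | ∃ t ∈ T, tr s t}

/-- `S₁ →∃ S₂` iff some state of `S₁` has a transition into `S₂`. -/
def exE {α : Type*} (tr : α → α → Prop) (S T : Set α) : Prop :=
  ∃ s ∈ S, ∃ t ∈ T, tr s t

/-- `μ𝒫(C) = ⋃ {E ∈ P | C ⊴ E}` for a block `C` of `P`. -/
def muBlk {α : Type*} (P : Set (Set α)) (ord : Set α → Set α → Prop)
    (C : Set α) : Set α :=
  ⋃₀ {E | E ∈ P ∧ ord C E}

/-- `C` is a partition refiner for `⟨P,⊴⟩`. -/
def IsPRefiner {α : Type*} (tr : α → α → Prop) (P : Set (Set α))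
    (ord : Set α → Set α → Prop) (C : Set α) : Prop :=
  C ∈ P ∧ ∃ B ∈ P, (B ∩ preR tr (muBlk P ord C)).Nonempty ∧
    (B \ preR tr (muBlk P ord C)).Nonempty

/-- If `C` is a `⊴`-maximal partition refiner of a partial order PR and the
block `B` witnesses that `C` is a partition refiner, then `B ¬→∃ C'` for
every block `C'` strictly above `C`. -/
theorem stmt10 {α : Type*} [Finite α] (tr : α → α → Prop)
    (P : Set (Set α)) (hP : IsPartition P)
    (ord : Set α → Set α → Prop)
    (hrefl : ∀ B ∈ P, ord B B)
    (htrans : ∀ B ∈ P, ∀ C ∈ P, ∀ D ∈ P, ord B C → ord C D → ord B D)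
    (hantisym : ∀ B ∈ P, ∀ C ∈ P, ord B C → ord C B → B = C)
    (C : Set α) (hC : IsPRefiner tr P ord C)
    (hmax : ∀ C' ∈ P, IsPRefiner tr P ord C' → ord C C' → C' = C)
    (B : Set α) (hB : B ∈ P)
    (hB1 : (B ∩ preR tr (muBlk P ord C)).Nonempty)
    (hB2 : ¬ B ⊆ preR tr (muBlk P ord C)) :
    ∀ C' ∈ P, ord C C' → C ≠ C' → ¬ exE tr B C' := by
  intro C' hC' hord hne hex
  -- μ(C') ⊆ μ(C), hence pre(μ(C')) ⊆ pre(μ(C))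
  have hmu : muBlk P ord C' ⊆ muBlk P ord C := by
    intro x hx
    obtain ⟨E, ⟨hEP, hEo⟩, hxE⟩ := hx
    exact ⟨E, ⟨hEP, htrans C hC.1 C' hC' E hEP hord hEo⟩, hxE⟩
  have hpre : preR tr (muBlk P ord C') ⊆ preR tr (muBlk P ord C) := by
    intro x ⟨t, ht, htr⟩
    exact ⟨t, hmu ht, htr⟩
  -- B ∩ pre(μ(C')) nonempty via exE
  obtain ⟨s, hs, t, ht, htr⟩ := hex
  have hs' : s ∈ B ∩ preR tr (muBlk P ord C') :=
    ⟨hs, t, ⟨C', ⟨hC', hrefl C' hC'⟩, ht⟩, htr⟩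
  -- C' is not a refiner
  have hnotref : ¬ IsPRefiner tr P ord C' := fun h => hne ((hmax C' hC' h hord).symm)
  -- so B \ pre(μ(C')) empty, i.e. B ⊆ pre(μ(C'))
  have hsub : B ⊆ preR tr (muBlk P ord C') := by
    by_contra hnot
    obtain ⟨y, hy, hyn⟩ := Set.not_subset.mp hnot
    exact hnotref ⟨hC', B, hB, ⟨s, hs'⟩, ⟨y, hy, hyn⟩⟩
  exact hB2 (hsub.trans hpre)
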